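/- In a gem (M, c), if {g1, g2} is a 2-edge cut both of whose edges are coloured yellow, then g1 and g2 lie in the same connected component of the spanning subgraph formed by the red and yellow edges, and g1 and g2 also lie in the same connected component of the spanning subgraph formed by the blue and yellow edges. (In the embedding represented by the gem, this says there is a red-yellow bigon C_v and a blue-yellow bigon A_f both containing g1 and g2, so the corresponding vertex v and face f form a bad vertex/face pair.) -/

import Mathlib

/-- The three colours used in a gem. -/
inductive Colour : Type
  | red | yellow | blue
deriving DecidableEq

/-- A proper edge colouring of a graph: two distinct edges sharing an endpoint
receive different colours. -/
def ProperEdgeColouring {V : Type*} {α : Type*} (G : SimpleGraph V) (c : Sym2 V → α) : Prop :=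
  ∀ e₁ ∈ G.edgeSet, ∀ e₂ ∈ G.edgeSet, e₁ ≠ e₂ → (∃ v, v ∈ e₁ ∧ v ∈ e₂) → c e₁ ≠ c e₂

/-- A cubic graph: every vertex has degree 3. -/
def IsCubic {V : Type*} (G : SimpleGraph V) : Prop :=
  ∀ v : V, (G.neighborSet v).ncard = 3

/-- The edge cut determined by a vertex set `S`: the set of edges of `G`
with exactly one endpoint in `S`. -/
def edgeCut {V : Type*} (G : SimpleGraph V) (S : Set V) : Set (Sym2 V) :=
  {e | ∃ u v, e = s(u, v) ∧ G.Adj u v ∧ u ∈ S ∧ v ∉ S}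

/-- The spanning subgraph of `G` formed by the edges coloured `x` or `y`. -/
def twoColourSubgraph {V : Type*} {α : Type*} (G : SimpleGraph V) (c : Sym2 V → α)
    (x y : α) : SimpleGraph V where
  Adj u v := G.Adj u v ∧ (c s(u, v) = x ∨ c s(u, v) = y)
  symm := by
    constructor
    intro u v h
    refine ⟨h.1.symm, ?_⟩
    rw [Sym2.eq_swap]
    exact h.2
  loopless := ⟨fun v h => G.loopless.irrefl v h.1⟩

/-- A gem: a connected cubic graph with a proper 3-edge-colouring (red, yellow,
blue) such that every connected component of the spanning subgraph formed by
the red and blue edges is a cycle of length 4 (equivalently, for a simple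
graph: that subgraph is 2-regular and each of its connected components has
exactly 4 vertices). -/
structure IsGem {V : Type*} (M : SimpleGraph V) (c : Sym2 V → Colour) : Prop where
  connected : M.Connected
  cubic : IsCubic M
  proper : ProperEdgeColouring M c
  rb_two_regular : ∀ v : V,
    ((twoColourSubgraph M c Colour.red Colour.blue).neighborSet v).ncard = 2
  rb_components_card4 : ∀ v : V,
    ((twoColourSubgraph M c Colour.red Colour.blue).connectedComponentMk v).supp.ncard = 4

section Aux

/-- Even cardinality from a fixpoint-free involution. -/
lemma even_card_of_invol {α : Type*} (s : Finset α) (f : α → α)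
    (hmem : ∀ a ∈ s, f a ∈ s) (hinv : ∀ a ∈ s, f (f a) = a) (hne : ∀ a ∈ s, f a ≠ a) :
    Even s.card := by
  have h0 : (∑ _x ∈ s, (1 : ZMod 2)) = 0 :=
    Finset.sum_involution (fun a _ => f a)
      (fun a _ => by decide)
      (fun a ha _ => hne a ha) (fun a ha => hmem a ha) (fun a ha => hinv a ha)
  have h1 : ((s.card : ℕ) : ZMod 2) = 0 := by simpa using h0
  have h2 : (2 : ℕ) ∣ s.card := by
    rwa [ZMod.natCast_eq_zero_iff] at h1
  exact even_iff_two_dvd.2 h2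

end Aux

instance : Fintype Colour :=
  ⟨{Colour.red, Colour.yellow, Colour.blue}, by intro x; cases x <;> simp⟩

/-- In a gem, every vertex has exactly two neighbours in the subgraph formed by
yellow edges and edges of one other colour. -/
lemma gem_two_nbrs {V : Type*} [Fintype V] (M : SimpleGraph V) (c : Sym2 V → Colour)
    (hgem : IsGem M c) (x : Colour) (hx : x ≠ Colour.yellow) (v : V) :
    ∃ a b, a ≠ b ∧
      ∀ w, (twoColourSubgraph M c x Colour.yellow).Adj v w ↔ (w = a ∨ w = b) := by
  classical
  have hinj : Set.InjOn (fun w => c s(v, w)) (M.neighborSet v) := by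
    intro w1 hw1 w2 hw2 hcc
    by_contra hne
    have he : s(v, w1) ≠ s(v, w2) := by
      intro h
      rcases Sym2.eq_iff.1 h with ⟨-, rfl⟩ | ⟨h1, h2⟩
      · exact hne rfl
      · rw [h2] at hw1
        exact M.loopless.irrefl v hw1
    exact hgem.proper _ ((M.mem_edgeSet).2 hw1) _ ((M.mem_edgeSet).2 hw2) he
      ⟨v, Sym2.mem_mk_left _ _, Sym2.mem_mk_left _ _⟩ hcc
  have himg : ((fun w => c s(v, w)) '' (M.neighborSet v)).ncard = 3 := by
    rw [Set.ncard_image_of_injOn hinj, hgem.cubic v]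
  have huniv : ((fun w => c s(v, w)) '' (M.neighborSet v)) = Set.univ := by
    apply Set.eq_of_subset_of_ncard_le (Set.subset_univ _)
    · rw [himg, Set.ncard_univ, Nat.card_eq_fintype_card]
      decide
  obtain ⟨a, ha, hca⟩ : ∃ w ∈ M.neighborSet v, c s(v, w) = x := by
    have : x ∈ ((fun w => c s(v, w)) '' (M.neighborSet v)) := huniv ▸ Set.mem_univ x
    exact this
  obtain ⟨b, hb, hcb⟩ : ∃ w ∈ M.neighborSet v, c s(v, w) = Colour.yellow := by
    have : Colour.yellow ∈ ((fun w => c s(v, w)) '' (M.neighborSet v)) :=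
      huniv ▸ Set.mem_univ _
    exact this
  refine ⟨a, b, ?_, ?_⟩
  · rintro rfl; exact hx (hca ▸ hcb ▸ rfl)
  · intro w
    constructor
    · rintro ⟨hadj, hc | hc⟩
      · exact Or.inl (hinj hadj ha (hc.trans hca.symm))
      · exact Or.inr (hinj hadj hb (hc.trans hcb.symm))
    · rintro (rfl | rfl)
      · exact ⟨ha, Or.inl hca⟩
      · exact ⟨hb, Or.inr hcb⟩

/-- Parity argument: if every vertex of `H` has exactly two `H`-neighbours, `H` is a
subgraph of `M`, and the `S`-cut of `M` is `{g1, g2}` with both edges in `H`, then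
the endpoints of `g1` and `g2` lie in a common component of `H`. -/
lemma crossing_reachable {V : Type*} [Fintype V] (M H : SimpleGraph V)
    (hHM : ∀ {u v : V}, H.Adj u v → M.Adj u v)
    (hdeg : ∀ v : V, ∃ a b, a ≠ b ∧ ∀ w, H.Adj v w ↔ (w = a ∨ w = b))
    (S : Set V) (g1 g2 : Sym2 V) (hcut : edgeCut M S = {g1, g2})
    (u1 v1 u2 v2 : V) (hg1 : g1 = s(u1, v1)) (hg2 : g2 = s(u2, v2))
    (h1 : H.Adj u1 v1) (hu1 : u1 ∈ S) (hv1 : v1 ∉ S)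
    (hu2 : u2 ∈ S) (hv2 : v2 ∉ S) :
    H.Reachable u1 u2 ∨ H.Reachable u1 v2 := by
  classical
  by_contra hcon
  push_neg at hcon
  obtain ⟨hr2, hr2'⟩ := hcon
  choose na nb hab hiff using hdeg
  set oth : V → V → V := fun v w => if w = na v then nb v else na v with hoth
  have hoth_adj : ∀ v w, H.Adj v w → H.Adj v (oth v w) := by
    intro v w hw
    by_cases h : w = na v <;> simp only [hoth, h, if_true, if_false, hiff] <;> tauto
  have hoth_ne : ∀ v w, H.Adj v w → oth v w ≠ w := by
    intro v w hw
    rcases (hiff v w).1 hw with rfl | rfl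
    · simp only [hoth, if_pos rfl]; exact (hab v).symm
    · by_cases h : nb v = na v
      · exact absurd h.symm (hab v)
      · simp only [hoth, if_neg h]; exact (hab v)
  have hoth_inv : ∀ v w, H.Adj v w → oth v (oth v w) = w := by
    intro v w hw
    rcases (hiff v w).1 hw with rfl | rfl
    · simp only [hoth, if_pos rfl, if_neg (hab v).symm]
    · by_cases h : nb v = na v
      · exact absurd h.symm (hab v)
      · simp only [hoth, if_neg h, if_pos rfl]
  set Q : Finset (V × V) :=
    Finset.univ.filter (fun p => p.1 ∈ S ∧ H.Reachable u1 p.1 ∧ H.Adj p.1 p.2) with hQ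
  have hQmem : ∀ p : V × V, p ∈ Q ↔ (p.1 ∈ S ∧ H.Reachable u1 p.1 ∧ H.Adj p.1 p.2) := by
    intro p; simp [hQ]
  -- Q has even cardinality via the "other neighbour" involution
  have hQeven : Even Q.card := by
    apply even_card_of_invol Q (fun p => (p.1, oth p.1 p.2))
    · intro p hp
      rw [hQmem] at hp ⊢
      exact ⟨hp.1, hp.2.1, hoth_adj _ _ hp.2.2⟩
    · intro p hp
      rw [hQmem] at hp
      exact Prod.ext rfl (hoth_inv _ _ hp.2.2)
    · intro p hp h
      rw [hQmem] at hp
      exact hoth_ne _ _ hp.2.2 (congrArg Prod.snd h)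
  -- split Q according to whether the second vertex is in S
  have hsplit :
      (Q.filter (fun p => p.2 ∈ S)).card + (Q.filter (fun p => ¬ p.2 ∈ S)).card = Q.card :=
    Finset.card_filter_add_card_filter_not _
  -- the inside part is even via the swap involution
  have hIeven : Even (Q.filter (fun p => p.2 ∈ S)).card := by
    apply even_card_of_invol _ Prod.swap
    · intro p hp
      simp only [Finset.mem_filter, hQmem] at hp ⊢
      obtain ⟨⟨h1', h2', h3'⟩, h4'⟩ := hp
      exact ⟨⟨h4', (h2'.trans h3'.reachable), h3'.symm⟩, h1'⟩
    · intro p _; exact Prod.swap_swap p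
    · intro p hp h
      simp only [Finset.mem_filter, hQmem] at hp
      have h12 : p.2 = p.1 := congrArg Prod.fst h
      exact H.loopless.irrefl p.1 (h12 ▸ hp.1.2.2)
  -- the crossing part is exactly {(u1, v1)}
  have hP : Q.filter (fun p => ¬ p.2 ∈ S) = {(u1, v1)} := by
    apply Finset.eq_singleton_iff_unique_mem.2
    constructor
    · simp only [Finset.mem_filter, hQmem]
      exact ⟨⟨hu1, SimpleGraph.Reachable.refl u1, h1⟩, hv1⟩
    · rintro ⟨p, q⟩ hp
      simp only [Finset.mem_filter, hQmem] at hp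
      obtain ⟨⟨hpS, hpr, hpq⟩, hqS⟩ := hp
      have hcutmem : s(p, q) ∈ edgeCut M S := ⟨p, q, rfl, hHM hpq, hpS, hqS⟩
      rw [hcut] at hcutmem
      rcases hcutmem with h | h
      · rw [hg1] at h
        rcases Sym2.eq_iff.1 h with ⟨rfl, rfl⟩ | ⟨rfl, rfl⟩
        · rfl
        · exact absurd hpS hv1
      · rw [Set.mem_singleton_iff, hg2] at h
        rcases Sym2.eq_iff.1 h with ⟨rfl, rfl⟩ | ⟨rfl, rfl⟩
        · exact absurd hpr hr2
        · exact absurd hpS hv2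
  rw [hP, Finset.card_singleton] at hsplit
  rw [← hsplit] at hQeven
  rcases hIeven with ⟨k, hk⟩
  rcases hQeven with ⟨m, hm⟩
  omega

/-- In a gem, if `{g1, g2}` is a yellow 2-edge cut, then `g1` and `g2` lie in
the same connected component of the red-yellow spanning subgraph (a red-yellow
bigon `C_v`) and in the same connected component of the blue-yellow spanning
subgraph (a blue-yellow bigon `A_f`); thus the corresponding vertex/face pair
of the represented embedding is bad. -/
theorem yellow_two_edge_cut_bad_pair {V : Type*} [Fintype V]
    (M : SimpleGraph V) (c : Sym2 V → Colour) (hgem : IsGem M c)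
    (S : Set V) (hS : S.Nonempty) (hSc : Sᶜ.Nonempty)
    (g1 g2 : Sym2 V) (hne : g1 ≠ g2) (hcut : edgeCut M S = {g1, g2})
    (hy1 : c g1 = Colour.yellow) (hy2 : c g2 = Colour.yellow) :
    (g1 ∈ (twoColourSubgraph M c Colour.red Colour.yellow).edgeSet ∧
     g2 ∈ (twoColourSubgraph M c Colour.red Colour.yellow).edgeSet ∧
     ∃ u v, u ∈ g1 ∧ v ∈ g2 ∧
       (twoColourSubgraph M c Colour.red Colour.yellow).Reachable u v) ∧
    (g1 ∈ (twoColourSubgraph M c Colour.blue Colour.yellow).edgeSet ∧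
     g2 ∈ (twoColourSubgraph M c Colour.blue Colour.yellow).edgeSet ∧
     ∃ u v, u ∈ g1 ∧ v ∈ g2 ∧
       (twoColourSubgraph M c Colour.blue Colour.yellow).Reachable u v) := by
  classical
  have hg1cut : g1 ∈ edgeCut M S := by rw [hcut]; exact Set.mem_insert _ _
  have hg2cut : g2 ∈ edgeCut M S := by rw [hcut]; exact Set.mem_insert_of_mem _ rfl
  obtain ⟨u1, v1, hg1, hadj1, hu1, hv1⟩ := hg1cut
  obtain ⟨u2, v2, hg2, hadj2, hu2, hv2⟩ := hg2cut
  have hc1 : c s(u1, v1) = Colour.yellow := hg1 ▸ hy1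
  have hc2 : c s(u2, v2) = Colour.yellow := hg2 ▸ hy2
  have main : ∀ x : Colour, x ≠ Colour.yellow →
      (g1 ∈ (twoColourSubgraph M c x Colour.yellow).edgeSet ∧
       g2 ∈ (twoColourSubgraph M c x Colour.yellow).edgeSet ∧
       ∃ u v, u ∈ g1 ∧ v ∈ g2 ∧
         (twoColourSubgraph M c x Colour.yellow).Reachable u v) := by
    intro x hx
    have h1 : (twoColourSubgraph M c x Colour.yellow).Adj u1 v1 := ⟨hadj1, Or.inr hc1⟩
    have h2 : (twoColourSubgraph M c x Colour.yellow).Adj u2 v2 := ⟨hadj2, Or.inr hc2⟩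
    refine ⟨?_, ?_, ?_⟩
    · rw [hg1]; exact (SimpleGraph.mem_edgeSet _).2 h1
    · rw [hg2]; exact (SimpleGraph.mem_edgeSet _).2 h2
    · rcases crossing_reachable M (twoColourSubgraph M c x Colour.yellow)
        (fun h => h.1) (gem_two_nbrs M c hgem x hx) S g1 g2 hcut
        u1 v1 u2 v2 hg1 hg2 h1 hu1 hv1 hu2 hv2 with h | h
      · exact ⟨u1, u2, by rw [hg1]; exact Sym2.mem_mk_left _ _,
          by rw [hg2]; exact Sym2.mem_mk_left _ _, h⟩
      · exact ⟨u1, v2, by rw [hg1]; exact Sym2.mem_mk_left _ _,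
          by rw [hg2]; exact Sym2.mem_mk_right _ _, h⟩
  exact ⟨main Colour.red (by decide), main Colour.blue (by decide)⟩
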